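/- Let a, b be integers with 2 ≤ a ≤ b ≤ C(a, ⌊a/2⌋). Then the complete bipartite graph K_{a,b} has an orientation D such that for any two vertices x, y lying in the same partite set, the directed distance from x to y in D is at most 2, and moreover every vertex has at least one in-neighbor and at least one out-neighbor. -/

import Mathlib

/-- `D` is an orientation of the simple graph `G`: every arc lies on an edge of `G`,
and every edge of `G` gets exactly one direction. -/
def IsOrientation {V : Type*} (G : SimpleGraph V) (D : V → V → Prop) : Prop :=
  (∀ u v, D u v → G.Adj u v) ∧ (∀ u v, G.Adj u v → (D u v ↔ ¬ D v u))

/-- The directed distance from `u` to `v` in the digraph `D` is at most 2. -/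
def DistLE2 {V : Type*} (D : V → V → Prop) (u v : V) : Prop :=
  D u v ∨ ∃ w, D u w ∧ D w v

/-- `D` is an orientation of the subgraph of `G` induced by `W`. -/
def IsOrientationOn {V : Type*} (G : SimpleGraph V) (W : Set V) (D : V → V → Prop) : Prop :=
  (∀ u v, D u v → u ∈ W ∧ v ∈ W ∧ G.Adj u v) ∧
  (∀ u v, u ∈ W → v ∈ W → G.Adj u v → (D u v ↔ ¬ D v u))

/-- `K_{a,b}` with `2 ≤ a ≤ b ≤ C(a, ⌊a/2⌋)` has an orientation in which vertices of the
same partite set are at directed distance at most 2, and every vertex has an in-neighbor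
and an out-neighbor. -/
theorem stmt2 (a b : ℕ) (h2 : 2 ≤ a) (hab : a ≤ b) (hb : b ≤ a.choose (a / 2)) :
    ∃ D : (Fin a ⊕ Fin b) → (Fin a ⊕ Fin b) → Prop,
      IsOrientation (completeBipartiteGraph (Fin a) (Fin b)) D ∧
      (∀ x y : Fin a ⊕ Fin b, x ≠ y →
        ((x.isLeft ∧ y.isLeft) ∨ (x.isRight ∧ y.isRight)) → DistLE2 D x y) ∧
      (∀ x, (∃ y, D y x) ∧ (∃ y, D x y)) := by
  classical
  haveI : NeZero a := ⟨by omega⟩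
  set k := a / 2 with hkdef
  have hk1 : 1 ≤ k := by omega
  have hka : k ≤ a := by omega
  have h2k : 2 * k ≤ a := by omega
  let I : Fin a → Finset (Fin a) := fun i =>
    Finset.image (fun t : Fin k => (Fin.castLE hka t) + i) Finset.univ
  have memI : ∀ (i z : Fin a), z ∈ I i ↔ (z - i).val < k := by
    intro i z
    simp only [I, Finset.mem_image, Finset.mem_univ, true_and]
    constructor
    · rintro ⟨t, rfl⟩
      simp [add_sub_cancel_right]
    · intro h
      refine ⟨⟨(z - i).val, h⟩, ?_⟩
      have hc : (Fin.castLE hka ⟨(z - i).val, h⟩) = z - i := by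
        apply Fin.ext; simp
      rw [hc, sub_add_cancel]
  have cardI : ∀ i, (I i).card = k := by
    intro i
    rw [Finset.card_image_of_injective _ (fun t t' ht => ?_), Finset.card_univ, Fintype.card_fin]
    have := add_right_cancel ht
    exact Fin.castLE_injective hka this
  have Iinj : Function.Injective I := by
    intro i i' h
    have h1 : i ∈ I i' := by rw [← h, memI]; simpa using (show 0 < k by omega)
    have h2' : i' ∈ I i := by rw [h, memI]; simpa using (show 0 < k by omega)
    rw [memI] at h1 h2'
    have hsum : ((i - i') + (i' - i)).val = 0 := by
      have : (i - i') + (i' - i) = 0 := by abel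
      rw [this]; rfl
    rw [Fin.val_add, Nat.mod_eq_of_lt (by omega)] at hsum
    have hz : i - i' = 0 := by
      apply Fin.ext
      simp only [Fin.val_zero]
      omega
    exact sub_eq_zero.mp hz
  -- separation property of intervals
  have sep : ∀ x y : Fin a, x ≠ y → ∃ i, x ∈ I i ∧ y ∉ I i := by
    intro x y hxy
    have hd0 : (y - x) ≠ 0 := sub_ne_zero.mpr (Ne.symm hxy)
    have hd : (y - x).val ≠ 0 := fun h => hd0 (Fin.ext (by simpa using h))
    by_cases hcase : k ≤ (y - x).val
    · refine ⟨x, ?_, ?_⟩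
      · rw [memI]; simp; omega
      · rw [memI]; omega
    · set c : Fin a := ⟨k - 1, by omega⟩ with hc
      refine ⟨x - c, ?_, ?_⟩
      · rw [memI, sub_sub_cancel]; simp [hc]; omega
      · rw [memI]
        have he : y - (x - c) = (y - x) + c := by abel
        rw [he, Fin.val_add]
        have hlt : (y - x).val + c.val < a := by simp [hc]; omega
        rw [Nat.mod_eq_of_lt hlt]
        simp [hc]; omega
  -- extend intervals to b distinct k-subsets
  let T : Finset (Finset (Fin a)) := Finset.powersetCard k Finset.univ
  have hT : T.card = a.choose k := by
    simp [T, Finset.card_powersetCard]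
  let R : Finset (Finset (Fin a)) := Finset.image I Finset.univ
  have hIT : ∀ i, I i ∈ T := fun i =>
    Finset.mem_powersetCard.mpr ⟨Finset.subset_univ _, cardI i⟩
  have hRT : R ⊆ T := by
    intro s hs
    simp only [R, Finset.mem_image, Finset.mem_univ, true_and] at hs
    obtain ⟨i, rfl⟩ := hs; exact hIT i
  have hR : R.card = a := by
    rw [Finset.card_image_of_injective _ Iinj, Finset.card_univ, Fintype.card_fin]
  have hdiff : b - a ≤ (T \ R).card := by
    rw [Finset.card_sdiff_of_subset hRT, hT, hR]; omega
  obtain ⟨e⟩ : Nonempty (Fin (b - a) ↪ ↥(T \ R)) := by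
    apply Function.Embedding.nonempty_of_card_le
    rw [Fintype.card_fin, Fintype.card_coe]
    exact hdiff
  let f : Fin b → Finset (Fin a) := fun j =>
    if h : (j : ℕ) < a then I ⟨j, h⟩
    else (e ⟨(j : ℕ) - a, by have := j.isLt; omega⟩ : ↥(T \ R)).val
  have hfT : ∀ j, f j ∈ T := by
    intro j
    by_cases h : (j : ℕ) < a
    · simp only [f, dif_pos h]; exact hIT _
    · simp only [f, dif_neg h]
      exact Finset.sdiff_subset (e _).prop
  have cardf : ∀ j, (f j).card = k := fun j => (Finset.mem_powersetCard.mp (hfT j)).2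
  have finj : Function.Injective f := by
    intro j j' hff
    by_cases hj : (j : ℕ) < a <;> by_cases hj' : (j' : ℕ) < a
    · simp only [f, dif_pos hj, dif_pos hj'] at hff
      have := Iinj hff
      exact Fin.ext (by simpa [Fin.ext_iff] using this)
    · simp only [f, dif_pos hj, dif_neg hj'] at hff
      exfalso
      have hmem : I ⟨(j : ℕ), hj⟩ ∈ R := Finset.mem_image_of_mem I (Finset.mem_univ _)
      have := (e ⟨(j' : ℕ) - a, by have := j'.isLt; omega⟩).prop
      rw [← hff] at this
      exact (Finset.mem_sdiff.mp this).2 hmem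
    · simp only [f, dif_neg hj, dif_pos hj'] at hff
      exfalso
      have hmem : I ⟨(j' : ℕ), hj'⟩ ∈ R := Finset.mem_image_of_mem I (Finset.mem_univ _)
      have := (e ⟨(j : ℕ) - a, by have := j.isLt; omega⟩).prop
      rw [hff] at this
      exact (Finset.mem_sdiff.mp this).2 hmem
    · simp only [f, dif_neg hj, dif_neg hj'] at hff
      have := e.injective (Subtype.ext hff)
      have hv : (j : ℕ) - a = (j' : ℕ) - a := by simpa [Fin.ext_iff] using this
      exact Fin.ext (by omega)
  have hC : ∀ x y : Fin a, x ≠ y → ∃ j : Fin b, x ∈ f j ∧ y ∉ f j := by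
    intro x y hxy
    obtain ⟨i, hxi, hyi⟩ := sep x y hxy
    have hia : (i : ℕ) < a := i.isLt
    refine ⟨⟨(i : ℕ), lt_of_lt_of_le hia hab⟩, ?_, ?_⟩ <;>
      · simp only [f, dif_pos hia]
        first
          | exact (by simpa using hxi)
          | exact (by simpa using hyi)
  have hanti : ∀ j j' : Fin b, j ≠ j' → ∃ x, x ∉ f j ∧ x ∈ f j' := by
    intro j j' hjj
    have hne : f j' ≠ f j := fun h => hjj (finj h).symm
    have hns : ¬ f j' ⊆ f j := fun hsub =>
      hne (Finset.eq_of_subset_of_card_le hsub (by rw [cardf, cardf]))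
    obtain ⟨x, hx1, hx2⟩ := Finset.not_subset.mp hns
    exact ⟨x, hx2, hx1⟩
  -- the orientation
  refine ⟨fun u v => match u, v with
    | Sum.inl x, Sum.inr j => x ∈ f j
    | Sum.inr j, Sum.inl x => x ∉ f j
    | Sum.inl _, Sum.inl _ => False
    | Sum.inr _, Sum.inr _ => False, ⟨?_, ?_⟩, ?_, ?_⟩
  · rintro (x | j) (y | j') h
    · exact h.elim
    · simp
    · simp
    · exact h.elim
  · rintro (x | j) (y | j') h
    · simp at h
    · exact not_not.symm
    · exact Iff.rfl
    · simp at h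
  · rintro (x | j) (y | j') hne hside
    · have hxy : x ≠ y := fun h => hne (by rw [h])
      obtain ⟨j, hj1, hj2⟩ := hC x y hxy
      exact Or.inr ⟨Sum.inr j, hj1, hj2⟩
    · rcases hside with ⟨_, h⟩ | ⟨h, _⟩ <;> simp at h
    · rcases hside with ⟨h, _⟩ | ⟨_, h⟩ <;> simp at h
    · have hjj : j ≠ j' := fun h => hne (by rw [h])
      obtain ⟨x, hx1, hx2⟩ := hanti j j' hjj
      exact Or.inr ⟨Sum.inl x, hx1, hx2⟩
  · rintro (x | j)
    · have hx2 : (⟨(x.val + 1) % a, Nat.mod_lt _ (by omega)⟩ : Fin a) ≠ x := by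
        intro h
        have hv := congrArg Fin.val h
        simp only at hv
        have hxa := x.isLt
        rcases Nat.lt_or_ge (x.val + 1) a with hc | hc
        · rw [Nat.mod_eq_of_lt hc] at hv; omega
        · have hx1 : x.val + 1 = a := by omega
          rw [hx1, Nat.mod_self] at hv; omega
      constructor
      · obtain ⟨j, _, hj2⟩ := hC _ x hx2
        exact ⟨Sum.inr j, hj2⟩
      · obtain ⟨j, hj1, _⟩ := hC x _ (Ne.symm hx2)
        exact ⟨Sum.inr j, hj1⟩
    · constructor
      · have : (f j).Nonempty := Finset.card_pos.mp (by rw [cardf]; omega)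
        obtain ⟨x, hx⟩ := this
        exact ⟨Sum.inl x, hx⟩
      · have : ∃ x, x ∉ f j := by
          by_contra hcon
          push_neg at hcon
          have hu : f j = Finset.univ := Finset.eq_univ_iff_forall.mpr hcon
          have hcard := cardf j
          rw [hu, Finset.card_univ, Fintype.card_fin] at hcard
          omega
        obtain ⟨x, hx⟩ := this
        exact ⟨Sum.inl x, hx⟩
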